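/- Let U be an [n,k]_{q^m/q} system with generator matrix G (columns form an F_q-basis of U), and let C be the F_{q^m}-linear code with generator matrix G. Then U is rank-ρ-saturating if and only if the rank-metric covering radius of the dual code C^⊥ equals ρ. -/

import Mathlib

open Matrix

/-- The rank weight of a vector. -/
noncomputable def rkWt (K : Type*) {L : Type*} [Field K] [Field L] [Algebra K L]
    {n : ℕ} (v : Fin n → L) : ℕ :=
  Module.finrank K (Submodule.span K (Set.range v))

/-- The rank-metric covering radius of a code `C ⊆ F_{q^m}^n`. -/
noncomputable def rkCovRad (K : Type*) {L : Type*} [Field K] [Field L] [Algebra K L]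
    {n : ℕ} (C : Set (Fin n → L)) : ℕ :=
  sInf {r : ℕ | ∀ x : Fin n → L, ∃ c ∈ C, rkWt K (x - c) ≤ r}

/-- Let `U` be an `[n,k]_{q^m/q}` system with generator matrix `G` (the columns of `G`
form an `F_q`-basis of `U`), and let `C` be the `F_{q^m}`-linear code with generator
matrix `G`. Then `U` is rank-`ρ`-saturating (every `v ∈ F_{q^m}^k` equals `Gλ` for some
`λ` of rank weight `≤ ρ`, with `ρ` minimal) if and only if the rank-metric covering
radius of the dual code `C^⊥` equals `ρ`. -/
theorem rankSat_iff_covRad_dual (K L : Type*) [Field K] [Field L] [Algebra K L]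
    [Fintype K] [Fintype L] {k n ρ : ℕ}
    (G : Matrix (Fin k) (Fin n) L)
    (U : Submodule K (Fin k → L))
    (hcols : LinearIndependent K (fun j : Fin n => Gᵀ j))
    (hU : Submodule.span K (Set.range fun j : Fin n => Gᵀ j) = U)
    (hnondeg : Submodule.span L (U : Set (Fin k → L)) = ⊤) :
    ((∀ v : Fin k → L, ∃ lam : Fin n → L, rkWt K lam ≤ ρ ∧ v = G.mulVec lam) ∧
        ∀ r < ρ, ¬ (∀ v : Fin k → L, ∃ lam : Fin n → L,
          rkWt K lam ≤ r ∧ v = G.mulVec lam))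
      ↔ rkCovRad K {v : Fin n → L |
          ∀ c ∈ {c : Fin n → L | ∃ x : Fin k → L, c = Matrix.vecMul x G},
            ∑ j, v j * c j = 0} = ρ := by
  classical
  set D : Set (Fin n → L) := {v : Fin n → L |
      ∀ c ∈ {c : Fin n → L | ∃ x : Fin k → L, c = Matrix.vecMul x G},
        ∑ j, v j * c j = 0} with hD
  -- Characterize the dual as the kernel of `mulVec G`.
  have hker : ∀ c : Fin n → L, c ∈ D ↔ G.mulVec c = 0 := by
    intro c
    constructor
    · intro hc
      funext i
      have := hc (Matrix.vecMul (Pi.single i 1) G) ⟨Pi.single i 1, rfl⟩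
      have h2 : ∑ j, c j * Matrix.vecMul (Pi.single i 1) G j
          = (Pi.single i 1 : Fin k → L) ⬝ᵥ (G *ᵥ c) := by
        rw [Matrix.dotProduct_mulVec]
        simp [dotProduct, mul_comm]
      rw [h2, single_dotProduct] at this
      simpa using this
    · intro hc c' hc'
      obtain ⟨x, rfl⟩ := hc'
      have : ∑ j, c j * Matrix.vecMul x G j = x ⬝ᵥ (G *ᵥ c) := by
        rw [Matrix.dotProduct_mulVec]
        simp [dotProduct, mul_comm]
      rw [this, hc]
      simp
  -- `mulVec G` is surjective.
  have hsurj : Function.Surjective G.mulVec := by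
    have hr : LinearMap.range G.mulVecLin = ⊤ := by
      rw [Matrix.range_mulVecLin]
      rw [← hnondeg, ← hU, Submodule.span_span_of_tower]
      rfl
    intro v
    have : v ∈ LinearMap.range G.mulVecLin := hr ▸ Submodule.mem_top
    obtain ⟨w, hw⟩ := this
    exact ⟨w, hw⟩
  -- The key equivalence between saturation at level r and covering at level r.
  have key : ∀ r : ℕ,
      (∀ v : Fin k → L, ∃ lam : Fin n → L, rkWt K lam ≤ r ∧ v = G.mulVec lam)
      ↔ (∀ x : Fin n → L, ∃ c ∈ D, rkWt K (x - c) ≤ r) := by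
    intro r
    constructor
    · intro h x
      obtain ⟨lam, hlam, heq⟩ := h (G.mulVec x)
      refine ⟨x - lam, ?_, by simpa using hlam⟩
      rw [hker]
      have : G.mulVec (x - lam) = G.mulVec x - G.mulVec lam := by
        simp [Matrix.mulVec_sub]
      rw [this, ← heq, sub_self]
    · intro h v
      obtain ⟨x, hx⟩ := hsurj v
      obtain ⟨c, hc, hwt⟩ := h x
      refine ⟨x - c, hwt, ?_⟩
      have hc0 := (hker c).mp hc
      rw [Matrix.mulVec_sub, hc0, sub_zero, hx]
  set S : Set ℕ := {r : ℕ | ∀ x : Fin n → L, ∃ c ∈ D, rkWt K (x - c) ≤ r} with hS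
  have hSmem : rkCovRad K D = sInf S := rfl
  have hntop : n ∈ S := by
    intro x
    refine ⟨0, ?_, ?_⟩
    · rw [hker]; simp
    · have := finrank_range_le_card (R := K) (x - 0)
      simpa [rkWt, Set.finrank] using this
  constructor
  · rintro ⟨h1, h2⟩
    have hρ : ρ ∈ S := (key ρ).mp h1
    have hlow : ∀ r < ρ, r ∉ S := fun r hr hrS => h2 r hr ((key r).mpr hrS)
    rw [hSmem]
    refine le_antisymm (Nat.sInf_le hρ) ?_
    by_contra hlt
    push_neg at hlt
    exact hlow _ hlt (Nat.sInf_mem ⟨ρ, hρ⟩)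
  · intro h
    rw [hSmem] at h
    have hρ : ρ ∈ S := by
      rw [← h]; exact Nat.sInf_mem ⟨n, hntop⟩
    constructor
    · exact (key ρ).mpr hρ
    · intro r hr hP
      have : r ∈ S := (key r).mp hP
      have := Nat.sInf_le this
      omega
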